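/- The function f(x̃, π) = −x̃_i − log(∑_{k=1}^{K} π_k v_k) − c + log X(e^{x̃}) is jointly convex in (x̃, π) ∈ ℝ^n × {π : ∑_k π_k v_k > 0}, where c is a constant and X(x) = a − 1 + ∏_{k=1}^n (1+x_k) with a > 0. -/

import Mathlib

open Finset

/-- Log-sum-exp of linear functionals with nonnegative weights (of positive total mass)
is convex. -/
lemma convexOn_log_sum_exp_weighted {ι E : Type*} [Fintype ι] [AddCommGroup E] [Module ℝ E]
    (L : ι → E →ₗ[ℝ] ℝ) (w : ι → ℝ) (hw : ∀ j, 0 ≤ w j) (hw' : 0 < ∑ j, w j) :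
    ConvexOn ℝ Set.univ (fun x => Real.log (∑ j, w j * Real.exp (L j x))) := by
  have hpos : ∀ z : E, 0 < ∑ j, w j * Real.exp (L j z) := by
    intro z
    obtain ⟨j0, hj0⟩ : ∃ j, (0:ℝ) < w j := by
      by_contra h
      push_neg at h
      have : ∑ j, w j ≤ 0 := Finset.sum_nonpos fun j _ => h j
      linarith
    exact Finset.sum_pos' (fun j _ => mul_nonneg (hw j) (Real.exp_pos _).le)
      ⟨j0, Finset.mem_univ _, mul_pos hj0 (Real.exp_pos _)⟩
  refine ⟨convex_univ, fun x _ y _ t s ht hs hts => ?_⟩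
  rcases eq_or_lt_of_le ht with h0 | ht'
  · have hs1 : s = 1 := by linarith
    simp [← h0, hs1]
  rcases eq_or_lt_of_le hs with h0 | hs'
  · have ht1 : t = 1 := by linarith
    simp [← h0, ht1]
  have ht1 : t < 1 := by linarith
  have hpq : Real.HolderConjugate t⁻¹ s⁻¹ := Real.holderConjugate_iff.mpr
    ⟨(one_lt_inv₀ ht').2 ht1, by rw [inv_inv, inv_inv]; exact hts⟩
  set A := ∑ j, w j * Real.exp (L j x) with hA
  set B := ∑ j, w j * Real.exp (L j y) with hB
  have hterm : ∀ j, w j * Real.exp (L j (t • x + s • y))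
      = (w j * Real.exp (L j x)) ^ t * (w j * Real.exp (L j y)) ^ s := by
    intro j
    have hwj := hw j
    rw [map_add, map_smul, map_smul, smul_eq_mul, smul_eq_mul,
      Real.mul_rpow hwj (Real.exp_pos _).le, Real.mul_rpow hwj (Real.exp_pos _).le,
      ← Real.exp_mul, ← Real.exp_mul, mul_comm (L j x) t, mul_comm (L j y) s]
    have hwts : w j ^ t * w j ^ s = w j := by
      rw [← Real.rpow_add' hwj (by rw [hts]; norm_num), hts, Real.rpow_one]
    calc w j * Real.exp (t * L j x + s * L j y)
        = (w j ^ t * w j ^ s) * (Real.exp (t * L j x) * Real.exp (s * L j y)) := by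
          rw [hwts, Real.exp_add]
      _ = w j ^ t * Real.exp (t * L j x) * (w j ^ s * Real.exp (s * L j y)) := by ring
  have key : ∑ j, w j * Real.exp (L j (t • x + s • y)) ≤ A ^ t * B ^ s := by
    calc ∑ j, w j * Real.exp (L j (t • x + s • y))
        = ∑ j, (w j * Real.exp (L j x)) ^ t * (w j * Real.exp (L j y)) ^ s := by
          exact Finset.sum_congr rfl fun j _ => hterm j
      _ ≤ (∑ j, ((w j * Real.exp (L j x)) ^ t) ^ (t⁻¹ : ℝ)) ^ (1 / (t⁻¹ : ℝ)) *
          (∑ j, ((w j * Real.exp (L j y)) ^ s) ^ (s⁻¹ : ℝ)) ^ (1 / (s⁻¹ : ℝ)) := by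
          refine Real.inner_le_Lp_mul_Lq_of_nonneg _ hpq ?_ ?_ <;>
            exact fun j _ => Real.rpow_nonneg (mul_nonneg (hw j) (Real.exp_pos _).le) _
      _ = A ^ t * B ^ s := by
          rw [one_div, inv_inv, one_div, inv_inv]
          congr 1 <;> congr 1 <;> refine Finset.sum_congr rfl fun j _ => ?_
          · rw [← Real.rpow_mul (mul_nonneg (hw j) (Real.exp_pos _).le),
              mul_inv_cancel₀ ht'.ne', Real.rpow_one]
          · rw [← Real.rpow_mul (mul_nonneg (hw j) (Real.exp_pos _).le),
              mul_inv_cancel₀ hs'.ne', Real.rpow_one]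
  have hAB : (0:ℝ) < A ^ t * B ^ s :=
    mul_pos (Real.rpow_pos_of_pos (hpos x) t) (Real.rpow_pos_of_pos (hpos y) s)
  calc Real.log (∑ j, w j * Real.exp (L j (t • x + s • y)))
      ≤ Real.log (A ^ t * B ^ s) := Real.log_le_log (hpos _) key
    _ = t * Real.log A + s * Real.log B := by
        rw [Real.log_mul (Real.rpow_pos_of_pos (hpos x) t).ne'
          (Real.rpow_pos_of_pos (hpos y) s).ne',
          Real.log_rpow (hpos x), Real.log_rpow (hpos y)]
    _ = t • Real.log A + s • Real.log B := by simp [smul_eq_mul]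

/-- Joint convexity of (x̃, π) ↦ -x̃_i - log(∑ π_k v_k) - c + log X(e^{x̃}),
where X(x) = a - 1 + ∏ (1 + x_k), a > 0, on ℝ^n × {π : ∑ π_k v_k > 0}. -/
theorem stmt4 (n K : ℕ) (i : Fin n) (v : Fin K → ℝ) (hv : ∀ k, 0 ≤ v k)
    (c a : ℝ) (ha : 0 < a) :
    ConvexOn ℝ ((Set.univ : Set (Fin n → ℝ)) ×ˢ {π : Fin K → ℝ | 0 < ∑ k, π k * v k})
      (fun p : (Fin n → ℝ) × (Fin K → ℝ) =>
        -p.1 i - Real.log (∑ k, p.2 k * v k) - c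
          + Real.log (a - 1 + ∏ k, (1 + Real.exp (p.1 k)))) := by
  set Ω : Set ((Fin n → ℝ) × (Fin K → ℝ)) :=
    (Set.univ : Set (Fin n → ℝ)) ×ˢ {π : Fin K → ℝ | 0 < ∑ k, π k * v k} with hΩ
  have hlin : IsLinearMap ℝ (fun p : (Fin n → ℝ) × (Fin K → ℝ) => ∑ k, p.2 k * v k) := by
    constructor
    · intro p q; simp [add_mul, Finset.sum_add_distrib]
    · intro r p; simp [Finset.mul_sum, mul_assoc]
  have hΩconv : Convex ℝ Ω := by
    rw [hΩ]
    refine convex_univ.prod ?_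
    have : Convex ℝ {π : Fin K → ℝ | 0 < ∑ k, π k * v k} := by
      have h2 : IsLinearMap ℝ (fun π : Fin K → ℝ => ∑ k, π k * v k) := by
        constructor
        · intro p q; simp [add_mul, Finset.sum_add_distrib]
        · intro r p; simp [Finset.mul_sum, mul_assoc]
      exact convex_halfSpace_gt h2 0
    exact this
  -- Term 1: affine part
  have hA : ConvexOn ℝ Ω (fun p : (Fin n → ℝ) × (Fin K → ℝ) => -p.1 i - c) := by
    refine ⟨hΩconv, fun x _ y _ t s ht hs hts => ?_⟩
    have h1 : (t • x + s • y).1 i = t * x.1 i + s * y.1 i := by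
      simp
    show -(t • x + s • y).1 i - c ≤ t • (-x.1 i - c) + s • (-y.1 i - c)
    apply le_of_eq
    rw [h1]
    simp only [smul_eq_mul]
    linear_combination c * hts
  -- Term 2: -log of the linear functional
  have hB : ConvexOn ℝ Ω
      (fun p : (Fin n → ℝ) × (Fin K → ℝ) => -Real.log (∑ k, p.2 k * v k)) := by
    refine ⟨hΩconv, fun p hp q hq t s ht hs hts => ?_⟩
    have hp2 : (0:ℝ) < ∑ k, p.2 k * v k := hp.2
    have hq2 : (0:ℝ) < ∑ k, q.2 k * v k := hq.2
    have hsum : ∑ k, (t • p + s • q).2 k * v k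
        = t * (∑ k, p.2 k * v k) + s * (∑ k, q.2 k * v k) := by
      simp [add_mul, Finset.sum_add_distrib, Finset.mul_sum, mul_assoc]
    have hneg : ConvexOn ℝ (Set.Ioi (0:ℝ)) (-Real.log) :=
      ConcaveOn.neg (StrictConcaveOn.concaveOn strictConcaveOn_log_Ioi)
    have hkey := hneg.2 (Set.mem_Ioi.2 hp2) (Set.mem_Ioi.2 hq2) ht hs hts
    simp only [Pi.neg_apply, smul_eq_mul] at hkey
    show -Real.log (∑ k, (t • p + s • q).2 k * v k)
        ≤ t • (-Real.log (∑ k, p.2 k * v k)) + s • (-Real.log (∑ k, q.2 k * v k))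
    rw [hsum]
    simp only [smul_eq_mul]
    linarith [hkey]
  -- Term 3: log of (a - 1 + ∏ (1 + exp))
  have hC : ConvexOn ℝ Ω
      (fun p : (Fin n → ℝ) × (Fin K → ℝ) =>
        Real.log (a - 1 + ∏ k, (1 + Real.exp (p.1 k)))) := by
    set L : Finset (Fin n) → ((Fin n → ℝ) × (Fin K → ℝ)) →ₗ[ℝ] ℝ := fun S =>
      { toFun := fun p => ∑ k ∈ S, p.1 k
        map_add' := by intro p q; simp [Finset.sum_add_distrib]
        map_smul' := by intro r p; simp [Finset.mul_sum] }
    set w : Finset (Fin n) → ℝ := fun S => if S = ∅ then a else 1 with hwdef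
    have hw : ∀ S, 0 ≤ w S := by
      intro S; by_cases h : S = ∅ <;> simp [hwdef, h, ha.le]
    have hw' : 0 < ∑ S, w S := by
      refine Finset.sum_pos (fun S _ => ?_) Finset.univ_nonempty
      by_cases h : S = ∅ <;> simp [hwdef, h, ha]
    have hconv := convexOn_log_sum_exp_weighted L w hw hw'
    have hfun : (fun p : (Fin n → ℝ) × (Fin K → ℝ) =>
        Real.log (a - 1 + ∏ k, (1 + Real.exp (p.1 k))))
        = (fun p => Real.log (∑ S, w S * Real.exp (L S p))) := by
      funext p
      congr 1
      have hprod : ∏ k, (1 + Real.exp (p.1 k))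
          = ∑ S : Finset (Fin n), Real.exp (∑ k ∈ S, p.1 k) := by
        have : ∀ k : Fin n, (1:ℝ) + Real.exp (p.1 k) = Real.exp (p.1 k) + 1 := fun k =>
          add_comm _ _
        rw [Finset.prod_congr rfl fun k _ => this k, Finset.prod_add]
        rw [Finset.powerset_univ]
        refine Finset.sum_congr rfl fun S _ => ?_
        rw [Real.exp_sum]
        simp
      have hterm : ∀ S : Finset (Fin n), w S * Real.exp (L S p)
          = Real.exp (∑ k ∈ S, p.1 k) + (if S = ∅ then a - 1 else 0) := by
        intro S
        by_cases h : S = ∅ <;> simp [hwdef, h, L] <;> ring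
      rw [hprod, Finset.sum_congr rfl fun S _ => hterm S, Finset.sum_add_distrib,
        Finset.sum_ite_eq' Finset.univ (∅ : Finset (Fin n)) (fun _ => a - 1)]
      simp
      ring
    rw [hfun]
    exact hconv.subset (Set.subset_univ _) hΩconv
  have hfinal := (hA.add hB).add hC
  have heq : (fun p : (Fin n → ℝ) × (Fin K → ℝ) =>
        -p.1 i - Real.log (∑ k, p.2 k * v k) - c
          + Real.log (a - 1 + ∏ k, (1 + Real.exp (p.1 k))))
      = (fun p : (Fin n → ℝ) × (Fin K → ℝ) =>
        ((fun p : (Fin n → ℝ) × (Fin K → ℝ) => -p.1 i - c) p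
          + (fun p : (Fin n → ℝ) × (Fin K → ℝ) => -Real.log (∑ k, p.2 k * v k)) p)
          + (fun p : (Fin n → ℝ) × (Fin K → ℝ) =>
              Real.log (a - 1 + ∏ k, (1 + Real.exp (p.1 k)))) p) := by
    funext p
    ring
  rw [heq]
  exact hfinal
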